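/- If a subset A of the tree ω^{<ω} (finite sequences of naturals, ordered by end-extension) contains no infinite antichain, then A can be covered by finitely many chains. -/

import Mathlib

/-- Comparability in the tree `ω^{<ω}` ordered by end-extension. -/
def Compar (s t : List ℕ) : Prop := s <+: t ∨ t <+: s

lemma compar_refl (s : List ℕ) : Compar s s := Or.inl (List.prefix_refl s)

lemma compar_symm {s t : List ℕ} (h : Compar s t) : Compar t s := h.symm

lemma compar_of_prefix {a x y : List ℕ} (hx : x <+: a) (hy : y <+: a) : Compar x y :=
  List.prefix_or_prefix_of_prefix hx hy

/-- A set is a finite union of chains. -/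
def FCU (S : Set (List ℕ)) : Prop :=
  ∃ C : Set (Set (List ℕ)), C.Finite ∧ (∀ c ∈ C, IsChain Compar c) ∧ S ⊆ ⋃₀ C

lemma FCU.mono {S T : Set (List ℕ)} (h : S ⊆ T) (hT : FCU T) : FCU S := by
  obtain ⟨C, hfin, hch, hsub⟩ := hT
  exact ⟨C, hfin, hch, h.trans hsub⟩

lemma FCU.union {S T : Set (List ℕ)} (hS : FCU S) (hT : FCU T) : FCU (S ∪ T) := by
  obtain ⟨C, hC, hCc, hCs⟩ := hS
  obtain ⟨D, hD, hDc, hDs⟩ := hT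
  refine ⟨C ∪ D, hC.union hD, ?_, ?_⟩
  · rintro c (hc | hc)
    exacts [hCc c hc, hDc c hc]
  · rw [Set.sUnion_union]
    exact Set.union_subset_union hCs hDs

lemma FCU.of_chain {S : Set (List ℕ)} (hS : IsChain Compar S) : FCU S :=
  ⟨{S}, Set.finite_singleton S, by simpa using hS, by simp⟩

/-- Key step: a set which is not a finite union of chains contains an element `a`
and a non-FCU subset all of whose elements are incomparable to `a`. -/
lemma key (S : Set (List ℕ)) (hS : ¬ FCU S) :
    ∃ p : List ℕ × Set (List ℕ),
      p.1 ∈ S ∧ p.2 ⊆ S ∧ ¬ FCU p.2 ∧ ∀ x ∈ p.2, ¬ Compar p.1 x := by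
  -- S is not a chain, so it has two incomparable elements a, b
  have hnc : ¬ IsChain Compar S := fun hc => hS (FCU.of_chain hc)
  unfold IsChain Set.Pairwise at hnc
  push_neg at hnc
  obtain ⟨a, ha, b, hb, -, hab⟩ := hnc
  set P : Set (List ℕ) := {x ∈ S | x <+: a} with hP
  set E : Set (List ℕ) := {x ∈ S | a <+: x} with hE
  set R : Set (List ℕ) := {x ∈ S | ¬ Compar a x} with hR
  have hcover : S ⊆ P ∪ E ∪ R := by
    intro x hx
    by_cases hc : Compar a x
    · rcases hc with hc | hc
      · exact Or.inl (Or.inr ⟨hx, hc⟩)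
      · exact Or.inl (Or.inl ⟨hx, hc⟩)
    · exact Or.inr ⟨hx, hc⟩
  have hPchain : IsChain Compar P := by
    intro x hx y hy _
    exact Or.inl (compar_of_prefix hx.2 hy.2)
  by_cases hEf : FCU E
  · by_cases hRf : FCU R
    · exact absurd (FCU.mono hcover (((FCU.of_chain hPchain).union hEf).union hRf)) hS
    · -- use a and R
      refine ⟨(a, R), ha, fun x hx => hx.1, hRf, fun x hx => ?_⟩
      exact hx.2
  · -- use b and E
    refine ⟨(b, E), hb, fun x hx => hx.1, hEf, fun x hx hbx => ?_⟩
    obtain ⟨hxS, hax⟩ := hx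
    rcases hbx with hbx | hbx
    · exact hab.1 (compar_of_prefix hax hbx)
    · exact hab.1 (Or.inl (hax.trans hbx))

noncomputable def seqS (A : Set (List ℕ)) (hA : ¬ FCU A) : ℕ → {S : Set (List ℕ) // ¬ FCU S}
  | 0 => ⟨A, hA⟩
  | n + 1 =>
    ⟨(Classical.choose (key _ (seqS A hA n).2)).2,
      (Classical.choose_spec (key _ (seqS A hA n).2)).2.2.1⟩

noncomputable def seqA (A : Set (List ℕ)) (hA : ¬ FCU A) (n : ℕ) : List ℕ :=
  (Classical.choose (key _ (seqS A hA n).2)).1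

lemma seq_spec (A : Set (List ℕ)) (hA : ¬ FCU A) (n : ℕ) :
    seqA A hA n ∈ (seqS A hA n).1 ∧ (seqS A hA (n + 1)).1 ⊆ (seqS A hA n).1 ∧
      ∀ x ∈ (seqS A hA (n + 1)).1, ¬ Compar (seqA A hA n) x := by
  have hs := Classical.choose_spec (key _ (seqS A hA n).2)
  exact ⟨hs.1, hs.2.1, hs.2.2.2⟩

lemma seqS_mono (A : Set (List ℕ)) (hA : ¬ FCU A) {i j : ℕ} (hij : i ≤ j) :
    (seqS A hA j).1 ⊆ (seqS A hA i).1 := by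
  induction j with
  | zero => simp_all
  | succ n ih =>
    rcases Nat.lt_or_ge i (n + 1) with hlt | hge
    · exact ((seq_spec A hA n).2.1).trans (ih (Nat.lt_succ_iff.mp hlt))
    · have : i = n + 1 := le_antisymm hij hge
      subst this; exact fun _ hx => hx

lemma seqA_incomp (A : Set (List ℕ)) (hA : ¬ FCU A) {i j : ℕ} (hij : i < j) :
    ¬ Compar (seqA A hA i) (seqA A hA j) := by
  have hj : seqA A hA j ∈ (seqS A hA (i + 1)).1 :=
    seqS_mono A hA hij ((seq_spec A hA j).1)
  exact (seq_spec A hA i).2.2 _ hj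

/-- If a subset `A` of `ω^{<ω}` contains no infinite antichain, then `A` can be
covered by finitely many chains. -/
theorem stmt0 (A : Set (List ℕ))
    (h : ∀ B ⊆ A, IsAntichain Compar B → B.Finite) :
    ∃ (n : ℕ) (c : Fin n → Set (List ℕ)),
      (∀ i, IsChain Compar (c i)) ∧ A ⊆ ⋃ i, c i := by
  by_cases hA : FCU A
  · obtain ⟨C, hfin, hch, hsub⟩ := hA
    classical
    refine ⟨hfin.toFinset.card, fun i => (hfin.toFinset.equivFin.symm i : Set (List ℕ)), ?_, ?_⟩
    · intro i
      exact hch _ (hfin.mem_toFinset.mp (hfin.toFinset.equivFin.symm i).2)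
    · intro x hx
      obtain ⟨c, hc, hxc⟩ := hsub hx
      refine Set.mem_iUnion.mpr ⟨hfin.toFinset.equivFin ⟨c, hfin.mem_toFinset.mpr hc⟩, ?_⟩
      simpa using hxc
  · exfalso
    set a : ℕ → List ℕ := seqA A hA with ha
    have hinc : ∀ {i j : ℕ}, i ≠ j → ¬ Compar (a i) (a j) := by
      intro i j hij
      rcases Nat.lt_or_ge i j with hlt | hge
      · exact seqA_incomp A hA hlt
      · have hlt : j < i := by omega
        exact fun hc => seqA_incomp A hA hlt (compar_symm hc)
    have hainj : Function.Injective a := by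
      intro i j hij
      by_contra hne
      exact hinc hne (hij ▸ compar_refl (a i))
    have hsubA : Set.range a ⊆ A := by
      rintro x ⟨n, rfl⟩
      have := (seq_spec A hA n).1
      exact seqS_mono A hA (Nat.zero_le n) this
    have hanti : IsAntichain Compar (Set.range a) := by
      rintro x ⟨i, rfl⟩ y ⟨j, rfl⟩ hxy
      exact hinc (fun hij => hxy (by rw [hij]))
    have hfin := h _ hsubA hanti
    exact (Set.infinite_range_of_injective hainj) hfin
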